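/- Let U₀ = (1,0,0) and U₁ = (u₁, v₁, w₁) with v₁ = 1/(β-1), w₁ = 1/(α-1), u₁ = α/(1-β) + β/(1-α) - 2. Then U(μ) = U₀ + μU₁ satisfies the fixed-point equations of the linearly-perturbed May–Leonard system up to an error of order O(μ²): i.e., substituting U(μ) into the right-hand side F(U, μ) of the system yields F(U₀ + μU₁, μ) = μ²·G(μ) for a polynomial remainder G; in particular the terms of order μ⁰ and μ¹ in F(U₀ + μU₁, μ) vanish identically. -/

import Mathlib

/-- The first-order expansion `U(μ) = U₀ + μU₁` about the single-population
equilibrium `e₁ = (1,0,0)` satisfies the fixed-point equations of the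
linearly-perturbed May–Leonard system up to `O(μ²)`: each component of
`F(U₀ + μU₁, μ)` is `μ²` times a polynomial in `μ`. -/
theorem first_order_expansion_e1 (α β : ℝ) (hα : 0 < α) (hβ : 0 < β)
    (hα1 : α ≠ 1) (hβ1 : β ≠ 1) :
    let v1 : ℝ := 1 / (β - 1)
    let w1 : ℝ := 1 / (α - 1)
    let u1 : ℝ := α / (1 - β) + β / (1 - α) - 2
    let M1 : ℝ → ℝ := fun μ => 1 + μ * u1
    let M2 : ℝ → ℝ := fun μ => 0 + μ * v1
    let M3 : ℝ → ℝ := fun μ => 0 + μ * w1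
    ∃ G1 G2 G3 : Polynomial ℝ,
      (∀ μ : ℝ,
        M1 μ * (1 - M1 μ - α * M2 μ - β * M3 μ)
          + μ * (-2 * M1 μ + M2 μ + M3 μ) = μ ^ 2 * G1.eval μ) ∧
      (∀ μ : ℝ,
        M2 μ * (1 - β * M1 μ - M2 μ - α * M3 μ)
          + μ * (M1 μ - 2 * M2 μ + M3 μ) = μ ^ 2 * G2.eval μ) ∧
      (∀ μ : ℝ,
        M3 μ * (1 - α * M1 μ - β * M2 μ - M3 μ)
          + μ * (M1 μ + M2 μ - 2 * M3 μ) = μ ^ 2 * G3.eval μ) := by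
  intro v1 w1 u1 M1 M2 M3
  have hb : β - 1 ≠ 0 := sub_ne_zero.mpr hβ1
  have ha : α - 1 ≠ 0 := sub_ne_zero.mpr hα1
  have hv : (β - 1) * v1 = 1 := by simp only [v1]; field_simp
  have hw : (α - 1) * w1 = 1 := by simp only [w1]; field_simp
  have hb' : (1:ℝ) - β ≠ 0 := fun h => hb (by linarith [sub_eq_zero.mp h])
  have ha' : (1:ℝ) - α ≠ 0 := fun h => ha (by linarith [sub_eq_zero.mp h])
  have hu : u1 + α * v1 + β * w1 + 2 = 0 := by
    simp only [u1, v1, w1]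
    field_simp
    ring
  refine ⟨Polynomial.C (v1 + w1),
    Polynomial.C (-v1 * (β * u1 + v1 + α * w1) + u1 - 2 * v1 + w1),
    Polynomial.C (-w1 * (α * u1 + β * v1 + w1) + u1 + v1 - 2 * w1), ?_, ?_, ?_⟩ <;>
    intro μ <;> simp only [M1, M2, M3, Polynomial.eval_C]
  · linear_combination (-(μ * (1 + μ * u1))) * hu
  · linear_combination (-μ) * hv
  · linear_combination (-μ) * hw
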